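/- Suppose the loss is self-bounded (|f'(u)| ≤ f(u)) and the gradient-descent iterates satisfy the descent condition F̂(w_{t+1}) ≤ F̂(w_t) − (η/2)‖∇F̂(w_t)‖² for all t ≥ 0. Then for every w ∈ ℝ^{md} and every T ≥ 1, with w_{αt} := αw_t + (1−α)w, (1/T)·Σ_{t=1}^T F̂(w_t) ≤ F̂(w) + ‖w − w_0‖²/(ηT) + (LR²/(2√m))·(1/T)·Σ_{t=0}^{T−1} (max_{α∈[0,1]} F̂(w_{αt}))·‖w − w_t‖². -/

import Mathlib

open scoped BigOperators

/-- Two-layer network `Φ(w,x) = (1/√m) ∑_j a_j σ(⟨w_j, x⟩)`. -/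
noncomputable def Phi {m d : ℕ} (a : Fin m → ℝ) (σ : ℝ → ℝ)
    (w : EuclideanSpace ℝ (Fin m × Fin d)) (x : EuclideanSpace ℝ (Fin d)) : ℝ :=
  (1 / Real.sqrt m) * ∑ j : Fin m, a j * σ (∑ i : Fin d, w (j, i) * x i)

/-- Empirical loss `F̂(w) = (1/n) ∑_i f(y_i Φ(w, x_i))`. -/
noncomputable def empLoss {m d n : ℕ} (a : Fin m → ℝ) (σ f : ℝ → ℝ)
    (x : Fin n → EuclideanSpace ℝ (Fin d)) (y : Fin n → ℝ)
    (w : EuclideanSpace ℝ (Fin m × Fin d)) : ℝ :=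
  (1 / (n : ℝ)) * ∑ i : Fin n, f (y i * Phi a σ w (x i))

open Set

lemma aux_lower (G G' G'' : ℝ → ℝ) (K : ℝ)
    (hG : ∀ α, HasDerivAt G (G' α) α)
    (hG' : ∀ α, HasDerivAt G' (G'' α) α)
    (hK : ∀ α ∈ Set.Icc (0:ℝ) 1, -K ≤ G'' α) :
    G 0 + G' 0 - K / 2 ≤ G 1 := by
  set χ : ℝ → ℝ := fun α => G α + K * α ^ 2 / 2 with hχdef
  set χ' : ℝ → ℝ := fun α => G' α + K * α with hχ'def
  have hχ : ∀ α, HasDerivAt χ (χ' α) α := by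
    intro α
    have : HasDerivAt (fun α : ℝ => K * α ^ 2 / 2) (K * α) α := by
      have := ((hasDerivAt_pow 2 α).const_mul K).div_const 2
      simpa using this.congr_deriv (by ring)
    exact (hG α).add this
  have hχ' : ∀ α, HasDerivAt χ' (G'' α + K) α := by
    intro α
    have : HasDerivAt (fun α : ℝ => K * α) K α := by
      simpa using (hasDerivAt_id α).const_mul K
    exact (hG' α).add this
  have hmono : MonotoneOn χ' (Icc (0:ℝ) 1) := by
    apply monotoneOn_of_deriv_nonneg (convex_Icc 0 1)
    · exact ContinuousOn.congr (fun α _ => (hχ' α).continuousAt.continuousWithinAt) (fun _ _ => rfl)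
    · exact fun α _ => (hχ' α).differentiableAt.differentiableWithinAt
    · intro α hα
      rw [(hχ' α).deriv]
      have := hK α (mem_Icc_of_Ioo (by simpa using hα))
      linarith
  obtain ⟨ξ, hξ, hslope⟩ := exists_hasDerivAt_eq_slope χ χ' one_pos
    (fun α _ => (hχ α).continuousAt.continuousWithinAt) (fun α _ => hχ α)
  have h0ξ : χ' 0 ≤ χ' ξ :=
    hmono (left_mem_Icc.mpr zero_le_one) ⟨hξ.1.le, hξ.2.le⟩ hξ.1.le
  rw [hslope] at h0ξ
  have : χ' 0 ≤ χ 1 - χ 0 := by simpa using h0ξ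
  simp only [hχdef, hχ'def] at this
  norm_num at this
  linarith

lemma aux_taylor (G G' G'' : ℝ → ℝ) (K : ℝ)
    (hG : ∀ α, HasDerivAt G (G' α) α)
    (hG' : ∀ α, HasDerivAt G' (G'' α) α)
    (hK : ∀ α ∈ Set.Icc (0:ℝ) 1, |G'' α| ≤ K) :
    |G 1 - G 0 - G' 0| ≤ K / 2 := by
  have h1 := aux_lower G G' G'' K hG hG' (fun α hα => (abs_le.mp (hK α hα)).1)
  have h2 := aux_lower (fun α => -G α) (fun α => -G' α) (fun α => -G'' α) K
    (fun α => (hG α).neg) (fun α => (hG' α).neg)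
    (fun α hα => by simpa using (abs_le.mp (hK α hα)).2)
  rw [abs_le]
  constructor <;> linarith

lemma aux_tangent (f : ℝ → ℝ) (hf : Differentiable ℝ f)
    (hfconv : ConvexOn ℝ Set.univ f) (u v : ℝ) :
    f u + deriv f u * (v - u) ≤ f v := by
  rcases lt_trichotomy u v with h | h | h
  · have := hfconv.deriv_le_slope (mem_univ u) (mem_univ v) h (hf u)
    rw [slope_def_field] at this
    have hv : 0 < v - u := by linarith
    rw [le_div_iff₀ hv] at this
    linarith
  · simp [h]
  · have := hfconv.slope_le_deriv (mem_univ v) (mem_univ u) h (hf u)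
    rw [slope_def_field] at this
    have hv : 0 < u - v := by linarith
    rw [div_le_iff₀ hv] at this
    nlinarith

noncomputable def lineG {m d n : ℕ} (a : Fin m → ℝ)
    (x : Fin n → EuclideanSpace ℝ (Fin d)) (y : Fin n → ℝ)
    (v h : EuclideanSpace ℝ (Fin m × Fin d)) (i : Fin n) (g : ℝ → ℝ) (α : ℝ) : ℝ :=
  y i * ((1 / Real.sqrt m) * ∑ j : Fin m,
    a j * g ((∑ k : Fin d, v (j, k) * x i k) + α * (∑ k : Fin d, h (j, k) * x i k)))

noncomputable def lineG' {m d n : ℕ} (a : Fin m → ℝ)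
    (x : Fin n → EuclideanSpace ℝ (Fin d)) (y : Fin n → ℝ)
    (v h : EuclideanSpace ℝ (Fin m × Fin d)) (i : Fin n) (g : ℝ → ℝ) (α : ℝ) : ℝ :=
  y i * ((1 / Real.sqrt m) * ∑ j : Fin m,
    a j * (g ((∑ k : Fin d, v (j, k) * x i k) + α * (∑ k : Fin d, h (j, k) * x i k))
      * (∑ k : Fin d, h (j, k) * x i k)))

noncomputable def lineG'' {m d n : ℕ} (a : Fin m → ℝ)
    (x : Fin n → EuclideanSpace ℝ (Fin d)) (y : Fin n → ℝ)
    (v h : EuclideanSpace ℝ (Fin m × Fin d)) (i : Fin n) (g : ℝ → ℝ) (α : ℝ) : ℝ :=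
  y i * ((1 / Real.sqrt m) * ∑ j : Fin m,
    a j * (g ((∑ k : Fin d, v (j, k) * x i k) + α * (∑ k : Fin d, h (j, k) * x i k))
      * (∑ k : Fin d, h (j, k) * x i k) * (∑ k : Fin d, h (j, k) * x i k)))

lemma aff_hasDerivAt {m d n : ℕ}
    (x : Fin n → EuclideanSpace ℝ (Fin d))
    (v h : EuclideanSpace ℝ (Fin m × Fin d)) (i : Fin n) (j : Fin m) (α : ℝ) :
    HasDerivAt (fun α : ℝ =>
      (∑ k : Fin d, v (j, k) * x i k) + α * (∑ k : Fin d, h (j, k) * x i k))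
      (∑ k : Fin d, h (j, k) * x i k) α := by
  simpa using ((hasDerivAt_id α).mul_const (∑ k : Fin d, h (j, k) * x i k)).const_add
    (∑ k : Fin d, v (j, k) * x i k)

lemma lineG_hasDerivAt {m d n : ℕ} (a : Fin m → ℝ)
    (x : Fin n → EuclideanSpace ℝ (Fin d)) (y : Fin n → ℝ)
    (v h : EuclideanSpace ℝ (Fin m × Fin d)) (i : Fin n) (g : ℝ → ℝ)
    (hg : Differentiable ℝ g) (α : ℝ) :
    HasDerivAt (lineG a x y v h i g) (lineG' a x y v h i (deriv g) α) α := by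
  unfold lineG lineG'
  apply HasDerivAt.const_mul
  apply HasDerivAt.const_mul
  apply HasDerivAt.fun_sum
  intro j _
  exact (((hg _).hasDerivAt).comp α (aff_hasDerivAt x v h i j α)).const_mul (a j)

lemma lineG'_hasDerivAt {m d n : ℕ} (a : Fin m → ℝ)
    (x : Fin n → EuclideanSpace ℝ (Fin d)) (y : Fin n → ℝ)
    (v h : EuclideanSpace ℝ (Fin m × Fin d)) (i : Fin n) (g : ℝ → ℝ)
    (hg : Differentiable ℝ g) (α : ℝ) :
    HasDerivAt (lineG' a x y v h i g) (lineG'' a x y v h i (deriv g) α) α := by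
  unfold lineG' lineG''
  apply HasDerivAt.const_mul
  apply HasDerivAt.const_mul
  apply HasDerivAt.fun_sum
  intro j _
  exact ((((hg _).hasDerivAt).comp α (aff_hasDerivAt x v h i j α)).mul_const
    (∑ k : Fin d, h (j, k) * x i k)).const_mul (a j)

lemma line_empLoss {m d n : ℕ} (a : Fin m → ℝ) (σ f : ℝ → ℝ)
    (x : Fin n → EuclideanSpace ℝ (Fin d)) (y : Fin n → ℝ)
    (v h : EuclideanSpace ℝ (Fin m × Fin d)) (α : ℝ) :
    empLoss a σ f x y (v + α • h)
      = (1 / (n : ℝ)) * ∑ i : Fin n, f (lineG a x y v h i σ α) := by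
  unfold empLoss Phi lineG
  congr 1
  apply Finset.sum_congr rfl
  intro i _
  congr 2
  congr 1
  apply Finset.sum_congr rfl
  intro j _
  congr 2
  rw [Finset.mul_sum, ← Finset.sum_add_distrib]
  apply Finset.sum_congr rfl
  intro k _
  have : (v + α • h) (j, k) = v (j, k) + α * h (j, k) := rfl
  rw [this]; ring

lemma lineG''_bound {m d n : ℕ} (L R : ℝ) (a : Fin m → ℝ) (ha : ∀ j, a j = 1 ∨ a j = -1)
    (x : Fin n → EuclideanSpace ℝ (Fin d)) (y : Fin n → ℝ)
    (hy : ∀ i, y i = 1 ∨ y i = -1) (hx : ∀ i, ‖x i‖ ≤ R)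
    (v h : EuclideanSpace ℝ (Fin m × Fin d)) (i : Fin n) (g : ℝ → ℝ)
    (hg : ∀ u, |g u| ≤ L) (α : ℝ) :
    |lineG'' a x y v h i g α| ≤ (L * R ^ 2 / Real.sqrt m) * ‖h‖ ^ 2 := by
  have hL : 0 ≤ L := le_trans (abs_nonneg _) (hg 0)
  have hyi : |y i| = 1 := by rcases hy i with h' | h' <;> simp [h']
  have hxi2 : ∑ k : Fin d, (x i k) ^ 2 ≤ R ^ 2 := by
    have hnorm : ‖x i‖ ^ 2 = ∑ k : Fin d, (x i k) ^ 2 := by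
      rw [EuclideanSpace.norm_eq, Real.sq_sqrt (by positivity)]
      simp [Real.norm_eq_abs, sq_abs]
    rw [← hnorm]
    have h0 : (0:ℝ) ≤ ‖x i‖ := norm_nonneg _
    nlinarith [hx i]
  have hhn : ∑ j : Fin m, ∑ k : Fin d, (h (j, k)) ^ 2 = ‖h‖ ^ 2 := by
    rw [EuclideanSpace.norm_eq, Real.sq_sqrt (by positivity)]
    rw [← Finset.sum_product']
    simp [Real.norm_eq_abs, sq_abs, Finset.univ_product_univ]
  unfold lineG''
  rw [abs_mul, hyi, one_mul, abs_mul]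
  have h1m : |1 / Real.sqrt (m:ℝ)| = 1 / Real.sqrt m := by
    rw [abs_of_nonneg]; positivity
  rw [h1m]
  have key : |∑ j : Fin m, a j * (g ((∑ k : Fin d, v (j, k) * x i k)
        + α * (∑ k : Fin d, h (j, k) * x i k))
      * (∑ k : Fin d, h (j, k) * x i k) * (∑ k : Fin d, h (j, k) * x i k))|
      ≤ L * R ^ 2 * ‖h‖ ^ 2 := by
    calc |∑ j : Fin m, a j * (g (_) * (∑ k : Fin d, h (j, k) * x i k)
            * (∑ k : Fin d, h (j, k) * x i k))|
        ≤ ∑ j : Fin m, |a j * (g ((∑ k : Fin d, v (j, k) * x i k)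
            + α * (∑ k : Fin d, h (j, k) * x i k))
          * (∑ k : Fin d, h (j, k) * x i k) * (∑ k : Fin d, h (j, k) * x i k))| :=
          Finset.abs_sum_le_sum_abs _ _
      _ ≤ ∑ j : Fin m, L * ((∑ k : Fin d, h (j, k) ^ 2) * R ^ 2) := by
          apply Finset.sum_le_sum
          intro j _
          have haj : |a j| = 1 := by rcases ha j with h' | h' <;> simp [h']
          rw [abs_mul, haj, one_mul, abs_mul, abs_mul]
          have hB2 : |∑ k : Fin d, h (j, k) * x i k| * |∑ k : Fin d, h (j, k) * x i k|
              ≤ (∑ k : Fin d, h (j, k) ^ 2) * R ^ 2 := by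
            rw [← abs_mul, ← pow_two]
            rw [abs_of_nonneg (sq_nonneg _)]
            calc (∑ k : Fin d, h (j, k) * x i k) ^ 2
                ≤ (∑ k : Fin d, h (j, k) ^ 2) * ∑ k : Fin d, (x i k) ^ 2 :=
                  Finset.sum_mul_sq_le_sq_mul_sq _ _ _
              _ ≤ (∑ k : Fin d, h (j, k) ^ 2) * R ^ 2 := by
                  apply mul_le_mul_of_nonneg_left hxi2 (by positivity)
          rw [mul_assoc]
          exact mul_le_mul (hg _) hB2 (by positivity) hL
      _ = L * R ^ 2 * ‖h‖ ^ 2 := by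
          rw [← Finset.mul_sum, ← Finset.sum_mul, hhn]; ring
  calc (1 / Real.sqrt m) * |_| ≤ (1 / Real.sqrt m) * (L * R ^ 2 * ‖h‖ ^ 2) := by
        apply mul_le_mul_of_nonneg_left key (by positivity)
    _ = (L * R ^ 2 / Real.sqrt m) * ‖h‖ ^ 2 := by ring

lemma empLoss_contDiff {m d n : ℕ} (a : Fin m → ℝ) (σ f : ℝ → ℝ)
    (hσ : ContDiff ℝ 2 σ) (hf : ContDiff ℝ 2 f)
    (x : Fin n → EuclideanSpace ℝ (Fin d)) (y : Fin n → ℝ) :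
    ContDiff ℝ 1 (empLoss a σ f x y) := by
  have hin : ∀ (i : Fin n) (j : Fin m),
      ContDiff ℝ 1 (fun w : EuclideanSpace ℝ (Fin m × Fin d) =>
        ∑ k : Fin d, w (j, k) * x i k) := fun i j =>
    ContDiff.sum fun k _ => (by exact ((EuclideanSpace.proj (j, k) : EuclideanSpace ℝ (Fin m × Fin d) →L[ℝ] ℝ).contDiff.mul contDiff_const))
  have hphi : ∀ i : Fin n,
      ContDiff ℝ 1 (fun w : EuclideanSpace ℝ (Fin m × Fin d) => y i * Phi a σ w (x i)) := by
    intro i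
    apply contDiff_const.mul
    unfold Phi
    exact contDiff_const.mul (ContDiff.sum fun j _ =>
      contDiff_const.mul ((hσ.of_le one_le_two).comp (hin i j)))
  unfold empLoss
  exact contDiff_const.mul (ContDiff.sum fun i _ =>
    (hf.of_le one_le_two).comp (hphi i))

lemma deriv_contDiff_of_two {g : ℝ → ℝ} (hg : ContDiff ℝ 2 g) :
    Differentiable ℝ (deriv g) := by
  have h2 : (2 : WithTop ℕ∞) = 1 + 1 := by norm_num
  rw [h2, contDiff_succ_iff_deriv] at hg
  exact hg.2.2.differentiable one_ne_zero

lemma key_grad_ineq {m d n : ℕ} (L R : ℝ)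
    (a : Fin m → ℝ) (ha : ∀ j, a j = 1 ∨ a j = -1)
    (σ : ℝ → ℝ) (hσ : ContDiff ℝ 2 σ)
    (hσ'' : ∀ u, |deriv (deriv σ) u| ≤ L)
    (f : ℝ → ℝ) (hf : ContDiff ℝ 2 f) (hfconv : ConvexOn ℝ Set.univ f)
    (hfnonneg : ∀ u, 0 ≤ f u) (hfself : ∀ u, |deriv f u| ≤ f u)
    (x : Fin n → EuclideanSpace ℝ (Fin d)) (y : Fin n → ℝ)
    (hx : ∀ i, ‖x i‖ ≤ R) (hy : ∀ i, y i = 1 ∨ y i = -1)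
    (v h : EuclideanSpace ℝ (Fin m × Fin d)) :
    (fderiv ℝ (empLoss a σ f x y) v) h
      ≤ empLoss a σ f x y (v + h) - empLoss a σ f x y v
        + (L * R ^ 2 / Real.sqrt m) * ‖h‖ ^ 2 / 2 * empLoss a σ f x y v := by
  set K : ℝ := (L * R ^ 2 / Real.sqrt m) * ‖h‖ ^ 2 with hK
  have hσd : Differentiable ℝ σ := hσ.differentiable two_ne_zero
  have hσ'd : Differentiable ℝ (deriv σ) := deriv_contDiff_of_two hσ
  have hfd : Differentiable ℝ f := hf.differentiable two_ne_zero
  set G : Fin n → ℝ → ℝ := fun i => lineG a x y v h i σ with hGdef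
  set G' : Fin n → ℝ → ℝ := fun i => lineG' a x y v h i (deriv σ) with hG'def
  have hG : ∀ i α, HasDerivAt (G i) (G' i α) α :=
    fun i α => lineG_hasDerivAt a x y v h i σ hσd α
  have hG' : ∀ i α, HasDerivAt (G' i) (lineG'' a x y v h i (deriv (deriv σ)) α) α :=
    fun i α => lineG'_hasDerivAt a x y v h i (deriv σ) hσ'd α
  have hbd : ∀ i α, |lineG'' a x y v h i (deriv (deriv σ)) α| ≤ K :=
    fun i α => lineG''_bound L R a ha x y hy hx v h i (deriv (deriv σ)) hσ'' α
  -- per-i inequality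
  have per_i : ∀ i : Fin n, deriv f (G i 0) * G' i 0
      ≤ f (G i 1) - f (G i 0) + K / 2 * f (G i 0) := by
    intro i
    have htay : |G i 1 - G i 0 - G' i 0| ≤ K / 2 :=
      aux_taylor (G i) (G' i) _ K (hG i) (hG' i) (fun α _ => hbd i α)
    have htan : f (G i 0) + deriv f (G i 0) * (G i 1 - G i 0) ≤ f (G i 1) :=
      aux_tangent f hfd hfconv (G i 0) (G i 1)
    have hr : |deriv f (G i 0) * (G i 1 - G i 0 - G' i 0)| ≤ f (G i 0) * (K / 2) := by
      rw [abs_mul]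
      exact mul_le_mul (hfself _) htay (abs_nonneg _) (hfnonneg _)
    have h1 : -(f (G i 0) * (K / 2)) ≤ deriv f (G i 0) * (G i 1 - G i 0 - G' i 0) :=
      neg_le_of_abs_le hr
    nlinarith [h1, htan]
  -- derivative of the line function two ways
  have hline : ∀ α : ℝ, HasDerivAt (fun β : ℝ => v + β • h) h α := by
    intro α
    simpa using ((hasDerivAt_id α).smul_const h).const_add v
  have hψ1 : HasDerivAt (fun α : ℝ => empLoss a σ f x y (v + α • h))
      ((fderiv ℝ (empLoss a σ f x y) v) h) 0 := by
    have hFd : DifferentiableAt ℝ (empLoss a σ f x y) (v + (0:ℝ) • h) := by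
      simpa using ((empLoss_contDiff a σ f hσ hf x y).differentiable one_ne_zero) (v + (0:ℝ) • h)
    have := (hFd.hasFDerivAt).comp_hasDerivAt 0 (hline 0)
    simpa [Function.comp_def] using this
  have hψeq : (fun α : ℝ => empLoss a σ f x y (v + α • h))
      = fun α : ℝ => (1 / (n : ℝ)) * ∑ i : Fin n, f (G i α) :=
    funext fun α => line_empLoss a σ f x y v h α
  have hψ2 : HasDerivAt (fun α : ℝ => empLoss a σ f x y (v + α • h))
      ((1 / (n : ℝ)) * ∑ i : Fin n, deriv f (G i 0) * G' i 0) 0 := by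
    rw [hψeq]
    apply HasDerivAt.const_mul
    apply HasDerivAt.fun_sum
    intro i _
    have := ((hfd (G i 0)).hasDerivAt).comp (0:ℝ) (hG i 0)
    simpa [mul_comm, Function.comp_def] using this
  have hDeq : (fderiv ℝ (empLoss a σ f x y) v) h
      = (1 / (n : ℝ)) * ∑ i : Fin n, deriv f (G i 0) * G' i 0 :=
    hψ1.unique hψ2
  -- endpoint values
  have hend1 : empLoss a σ f x y (v + h) = (1 / (n : ℝ)) * ∑ i : Fin n, f (G i 1) := by
    have := line_empLoss a σ f x y v h 1
    simpa using this
  have hend0 : empLoss a σ f x y v = (1 / (n : ℝ)) * ∑ i : Fin n, f (G i 0) := by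
    have := line_empLoss a σ f x y v h 0
    simpa using this
  have hn0 : (0:ℝ) ≤ 1 / (n : ℝ) := by positivity
  have hsum : ∑ i : Fin n, deriv f (G i 0) * G' i 0
      ≤ (∑ i : Fin n, f (G i 1)) - (∑ i : Fin n, f (G i 0))
        + K / 2 * ∑ i : Fin n, f (G i 0) := by
    rw [Finset.mul_sum, ← Finset.sum_sub_distrib, ← Finset.sum_add_distrib]
    exact Finset.sum_le_sum fun i _ => per_i i
  rw [hDeq, hend1, hend0]
  calc (1 / (n : ℝ)) * ∑ i : Fin n, deriv f (G i 0) * G' i 0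
      ≤ (1 / (n : ℝ)) * ((∑ i : Fin n, f (G i 1)) - (∑ i : Fin n, f (G i 0))
        + K / 2 * ∑ i : Fin n, f (G i 0)) := mul_le_mul_of_nonneg_left hsum hn0
    _ = (1 / (n : ℝ)) * (∑ i : Fin n, f (G i 1))
        - (1 / (n : ℝ)) * (∑ i : Fin n, f (G i 0))
        + K / 2 * ((1 / (n : ℝ)) * ∑ i : Fin n, f (G i 0)) := by ring


set_option maxHeartbeats 1000000 in
/-- regret bound for GD under the descent condition, with the
self-bounded weak-convexity correction term. -/
theorem train_loss_regret_general
    {m d n : ℕ} (ℓ L R η : ℝ)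
    (a : Fin m → ℝ) (ha : ∀ j, a j = 1 ∨ a j = -1)
    (σ : ℝ → ℝ) (hσ : ContDiff ℝ 2 σ)
    (hσ' : ∀ u, |deriv σ u| ≤ ℓ) (hσ'' : ∀ u, |deriv (deriv σ) u| ≤ L)
    (f : ℝ → ℝ) (hf : ContDiff ℝ 2 f) (hfconv : ConvexOn ℝ Set.univ f)
    (hfnonneg : ∀ u, 0 ≤ f u) (hfself : ∀ u, |deriv f u| ≤ f u)
    (x : Fin n → EuclideanSpace ℝ (Fin d)) (y : Fin n → ℝ)
    (hx : ∀ i, ‖x i‖ ≤ R) (hy : ∀ i, y i = 1 ∨ y i = -1)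
    (hη : 0 < η)
    (w₀ : EuclideanSpace ℝ (Fin m × Fin d))
    (W : ℕ → EuclideanSpace ℝ (Fin m × Fin d)) (hW0 : W 0 = w₀)
    (hWrec : ∀ t : ℕ, W (t + 1) = W t - η • gradient (empLoss a σ f x y) (W t))
    (hdescent : ∀ t : ℕ,
      empLoss a σ f x y (W (t + 1))
        ≤ empLoss a σ f x y (W t) - (η / 2) * ‖gradient (empLoss a σ f x y) (W t)‖ ^ 2)
    (w : EuclideanSpace ℝ (Fin m × Fin d)) (T : ℕ) (hT : 1 ≤ T) :
    (1 / (T : ℝ)) * ∑ t ∈ Finset.Icc 1 T, empLoss a σ f x y (W t)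
      ≤ empLoss a σ f x y w + ‖w - w₀‖ ^ 2 / (η * T)
        + (L * R ^ 2 / (2 * Real.sqrt m)) * ((1 / (T : ℝ)) *
            ∑ t ∈ Finset.range T,
              (⨆ α : Set.Icc (0 : ℝ) 1,
                  empLoss a σ f x y ((α : ℝ) • W t + (1 - (α : ℝ)) • w))
                * ‖w - W t‖ ^ 2) := by
  classical
  set F : EuclideanSpace ℝ (Fin m × Fin d) → ℝ := empLoss a σ f x y with hF
  set c : ℝ := L * R ^ 2 / Real.sqrt m with hc
  have hL : 0 ≤ L := le_trans (abs_nonneg _) (hσ'' 0)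
  have hcnn : 0 ≤ c := by positivity
  have hFnn : ∀ p, 0 ≤ F p := by
    intro p
    apply mul_nonneg (by positivity)
    exact Finset.sum_nonneg fun i _ => hfnonneg _
  have hFcont : Continuous F :=
    (empLoss_contDiff a σ f hσ hf x y).continuous
  -- the supremum
  set S : ℕ → ℝ := fun t => ⨆ α : Set.Icc (0 : ℝ) 1,
      F ((α : ℝ) • W t + (1 - (α : ℝ)) • w) with hS
  have hSt : ∀ t, F (W t) ≤ S t := by
    intro t
    have hbdd : BddAbove (Set.range fun α : Set.Icc (0:ℝ) 1 =>
        F ((α : ℝ) • W t + (1 - (α : ℝ)) • w)) := by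
      have hcont2 : Continuous fun α : ℝ => F (α • W t + (1 - α) • w) :=
        hFcont.comp ((continuous_id.smul continuous_const).add
          ((continuous_const.sub continuous_id).smul continuous_const))
      rw [show (Set.range fun α : Set.Icc (0:ℝ) 1 =>
          F ((α : ℝ) • W t + (1 - (α : ℝ)) • w))
          = (fun α : ℝ => F (α • W t + (1 - α) • w)) '' Set.Icc 0 1 from
        (Set.image_eq_range (fun α : ℝ => F (α • W t + (1 - α) • w)) (Set.Icc 0 1)).symm]
      exact (isCompact_Icc.image hcont2).bddAbove
    have := le_ciSup hbdd (⟨1, by norm_num⟩ : Set.Icc (0:ℝ) 1)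
    simpa using this
  have hSnn : ∀ t, 0 ≤ S t := fun t => le_trans (hFnn _) (hSt t)
  -- per-step inequality
  have hgradinner : ∀ (p u : EuclideanSpace ℝ (Fin m × Fin d)),
      (inner ℝ (gradient F p) u : ℝ) = (fderiv ℝ F p) u := by
    intro p u
    exact InnerProductSpace.toDual_symm_apply
  have step : ∀ t : ℕ, 2 * η * F (W (t + 1))
      ≤ ‖W t - w‖ ^ 2 - ‖W (t + 1) - w‖ ^ 2 + 2 * η * F w
        + η * c * (S t * ‖w - W t‖ ^ 2) := by
    intro t
    set g : EuclideanSpace ℝ (Fin m × Fin d) := gradient F (W t) with hg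
    have hkey := key_grad_ineq L R a ha σ hσ hσ'' f hf hfconv hfnonneg hfself
      x y hx hy (W t) (w - W t)
    have hvh : W t + (w - W t) = w := by abel
    rw [hvh] at hkey
    have hfder : (fderiv ℝ F (W t)) (w - W t) = (inner ℝ g (w - W t) : ℝ) :=
      (hgradinner (W t) (w - W t)).symm
    rw [hfder] at hkey
    -- hkey : ⟪g, w - W t⟫ ≤ F w - F (W t) + c * ‖w - W t‖^2 / 2 * F (W t)
    have hsup : c * ‖w - W t‖ ^ 2 / 2 * F (W t) ≤ c * ‖w - W t‖ ^ 2 / 2 * S t :=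
      mul_le_mul_of_nonneg_left (hSt t) (by positivity)
    have hnorm : ‖W (t + 1) - w‖ ^ 2
        = ‖W t - w‖ ^ 2 - 2 * (η * (inner ℝ (W t - w) g : ℝ)) + η ^ 2 * ‖g‖ ^ 2 := by
      rw [hWrec t, ← hg]
      have : W t - η • g - w = (W t - w) - η • g := by abel
      rw [this, norm_sub_sq_real, real_inner_smul_right, norm_smul]
      simp [abs_of_pos hη, mul_pow]
    have hinner2 : (inner ℝ (W t - w) g : ℝ) = -(inner ℝ g (w - W t) : ℝ) := by
      rw [real_inner_comm]
      rw [show w - W t = -(W t - w) by abel, inner_neg_right]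
      ring
    have hdes : η ^ 2 * ‖g‖ ^ 2 ≤ 2 * η * (F (W t) - F (W (t + 1))) := by
      have := hdescent t
      nlinarith [sq_nonneg ‖g‖, hη.le]
    have hinnerlb : (inner ℝ (W t - w) g : ℝ)
        ≥ F (W t) - F w - c * ‖w - W t‖ ^ 2 / 2 * S t := by
      rw [hinner2]
      linarith [le_trans hkey (by linarith : F w - F (W t)
        + c * ‖w - W t‖ ^ 2 / 2 * F (W t) ≤ F w - F (W t)
        + c * ‖w - W t‖ ^ 2 / 2 * S t)]
    nlinarith [hnorm, hinnerlb, hdes, hη]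
  -- sum it up
  set T' : ℝ := (T : ℝ) with hT'
  have hT'pos : (0:ℝ) < T' := by
    rw [hT']
    have : 0 < T := Nat.lt_of_lt_of_le Nat.zero_lt_one hT
    exact_mod_cast this
  set Ssum : ℝ := ∑ t ∈ Finset.range T, S t * ‖w - W t‖ ^ 2 with hSsum
  set X : ℝ := ∑ t ∈ Finset.Icc 1 T, F (W t) with hX
  have hsumstep : 2 * η * X
      ≤ ‖w - w₀‖ ^ 2 + 2 * η * T' * F w + η * c * Ssum := by
    have hXeq : X = ∑ t ∈ Finset.range T, F (W (t + 1)) := by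
      rw [hX, ← Finset.Ico_add_one_right_eq_Icc, Finset.sum_Ico_eq_sum_range]
      simp [add_comm]
    have h1 : ∑ t ∈ Finset.range T,
        (‖W t - w‖ ^ 2 - ‖W (t + 1) - w‖ ^ 2) = ‖W 0 - w‖ ^ 2 - ‖W T - w‖ ^ 2 :=
      Finset.sum_range_sub' (fun t => ‖W t - w‖ ^ 2) T
    have h2 := Finset.sum_le_sum (fun t (_ : t ∈ Finset.range T) => step t)
    rw [Finset.sum_add_distrib, Finset.sum_add_distrib, h1] at h2
    have h3 : ∑ t ∈ Finset.range T, 2 * η * F (W (t+1)) = 2 * η * X := by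
      rw [hXeq, Finset.mul_sum]
    have h4 : ∑ t ∈ Finset.range T, 2 * η * F w = T' * (2 * η * F w) := by
      rw [Finset.sum_const, Finset.card_range]; push_cast [hT']; ring
    have h5 : ∑ t ∈ Finset.range T, η * c * (S t * ‖w - W t‖ ^ 2) = η * c * Ssum := by
      rw [hSsum, Finset.mul_sum]
    rw [h3, h4, h5] at h2
    have h6 : ‖W 0 - w‖ ^ 2 = ‖w - w₀‖ ^ 2 := by rw [hW0, norm_sub_rev]
    nlinarith [sq_nonneg ‖W T - w‖, h2]
  -- final algebra
  have hcoef : L * R ^ 2 / (2 * Real.sqrt m) = c / 2 := by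
    rw [hc]; ring
  rw [hcoef]
  have hηT : (0:ℝ) < 2 * η * T' := by positivity
  have final : (1 / T') * X ≤ F w + ‖w - w₀‖ ^ 2 / (η * T') + c / 2 * ((1 / T') * Ssum) := by
    have e1 : (1 / T') * X = (2 * η * X) / (2 * η * T') := by
      field_simp
    rw [e1]
    have e2 : (2 * η * X) / (2 * η * T')
        ≤ (‖w - w₀‖ ^ 2 + 2 * η * T' * F w + η * c * Ssum) / (2 * η * T') :=
      div_le_div_of_nonneg_right hsumstep hηT.le
    have e3 : (‖w - w₀‖ ^ 2 + 2 * η * T' * F w + η * c * Ssum) / (2 * η * T')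
        = F w + ‖w - w₀‖ ^ 2 / (2 * (η * T')) + c / 2 * ((1 / T') * Ssum) := by
      field_simp
      ring
    have e4 : ‖w - w₀‖ ^ 2 / (2 * (η * T')) ≤ ‖w - w₀‖ ^ 2 / (η * T') := by
      apply div_le_div_of_nonneg_left (by positivity) (by positivity)
      nlinarith [mul_pos hη hT'pos]
    rw [e3] at e2
    linarith [e2, e4]
  exact final
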